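/- There exists a finite sequence of 12 unitary 4×4 matrices, each of which is either the CNOT gate or of the form I₂ ⊗ g with g ∈ {H, S, S†, T, T†}, such that the product of the sequence equals the controlled-exp(−i(π/4)Y) gate P₀ ⊗ I₂ + P₁ ⊗ exp(−i(π/4)Y), and such that the sequence contains exactly 4 factors I₂ ⊗ H, 4 factors from {I₂ ⊗ S, I₂ ⊗ S†}, 2 factors from {I₂ ⊗ T, I₂ ⊗ T†}, and 2 CNOT gates. -/

import Mathlib

open Matrix Kronecker
open scoped Classical

/-- The Hadamard gate. -/
noncomputable def Hgate : Matrix (Fin 2) (Fin 2) ℂ :=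
  ((Real.sqrt 2 : ℂ))⁻¹ • !![1, 1; 1, -1]

/-- The phase gate `S = diag(1, i)`. -/
def Sgate : Matrix (Fin 2) (Fin 2) ℂ := !![1, 0; 0, Complex.I]

/-- The `π/8` gate `T = diag(1, e^{iπ/4})`. -/
noncomputable def Tgate : Matrix (Fin 2) (Fin 2) ℂ :=
  !![1, 0; 0, Complex.exp (Complex.I * (Real.pi / 4))]

/-- The Pauli-Y matrix. -/
def Ygate : Matrix (Fin 2) (Fin 2) ℂ := !![0, -Complex.I; Complex.I, 0]

/-- The projector `|0⟩⟨0| = diag(1,0)`. -/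
def P0 : Matrix (Fin 2) (Fin 2) ℂ := Matrix.diagonal ![1, 0]

/-- The projector `|1⟩⟨1| = diag(0,1)`. -/
def P1 : Matrix (Fin 2) (Fin 2) ℂ := Matrix.diagonal ![0, 1]

/-- The CNOT gate, mapping `|a⟩⊗|b⟩` to `|a⟩⊗|b⊕a⟩` (first qubit is the control). -/
def CNOT : Matrix (Fin 2 × Fin 2) (Fin 2 × Fin 2) ℂ :=
  Matrix.of fun r c => if r.1 = c.1 ∧ r.2 = c.2 + c.1 then 1 else 0

/-- The two-qubit gate described by `d`: `none` is the CNOT gate and `some g` is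
`I₂ ⊗ g` (the single-qubit gate `g` on the second qubit). -/
noncomputable def realize : Option (Matrix (Fin 2) (Fin 2) ℂ) →
    Matrix (Fin 2 × Fin 2) (Fin 2 × Fin 2) ℂ
  | none => CNOT
  | some g => (1 : Matrix (Fin 2) (Fin 2) ℂ) ⊗ₖ g

-- ==================== auxiliary ====================

noncomputable abbrev c2 : ℂ := ((Real.sqrt 2 : ℂ))⁻¹

def Xg : Matrix (Fin 2) (Fin 2) ℂ := !![0, 1; 1, 0]

noncomputable def Rg : Matrix (Fin 2) (Fin 2) ℂ := c2 • !![1, -1; 1, 1]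

lemma sqrt2_sq : ((Real.sqrt 2 : ℝ) : ℂ) * ((Real.sqrt 2 : ℝ) : ℂ) = 2 := by
  rw [← Complex.ofReal_mul, Real.mul_self_sqrt (by norm_num)]
  norm_num

lemma sqrt2_ne : ((Real.sqrt 2 : ℝ) : ℂ) ≠ 0 := by
  simp [Real.sqrt_eq_zero']

lemma hc2 : c2 * c2 = 2⁻¹ := by
  rw [← mul_inv, sqrt2_sq]

lemma c2_ne : c2 ≠ 0 := inv_ne_zero sqrt2_ne

lemma creal : ((Real.sqrt 2 / 2 : ℝ) : ℂ) = c2 := by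
  have h2 : Real.sqrt 2 * Real.sqrt 2 = 2 := Real.mul_self_sqrt (by norm_num)
  have hne : Real.sqrt 2 ≠ 0 := by positivity
  have h : (Real.sqrt 2 / 2 : ℝ) = (Real.sqrt 2)⁻¹ := by
    field_simp
    exact Real.sq_sqrt (by norm_num)
  rw [h, Complex.ofReal_inv]

lemma homega : Complex.exp (Complex.I * (Real.pi / 4)) = c2 * (1 + Complex.I) := by
  rw [mul_comm, Complex.exp_mul_I]
  have h4 : ((Real.pi : ℂ) / 4) = ((Real.pi / 4 : ℝ) : ℂ) := by push_cast; ring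
  rw [h4, ← Complex.ofReal_cos, ← Complex.ofReal_sin, Real.cos_pi_div_four,
    Real.sin_pi_div_four, creal]
  ring

lemma hI : Complex.I * Complex.I = -1 := Complex.I_mul_I

lemma homega' :
    Complex.exp (-(Complex.I * ((Real.pi : ℂ) / 4))) = c2 * (1 - Complex.I) := by
  rw [Complex.exp_neg, homega]
  have h1 : (c2 * (1 + Complex.I)) * (c2 * (1 - Complex.I)) = 1 := by
    linear_combination (1 - Complex.I * Complex.I) * hc2 - 2⁻¹ * hI
  exact inv_eq_of_mul_eq_one_right h1

lemma Tgate_eq : Tgate = !![1, 0; 0, c2 * (1 + Complex.I)] := by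
  rw [Tgate, homega]

lemma Sd_eq : Sgateᴴ = !![1, 0; 0, -Complex.I] := by
  ext i j
  fin_cases i <;> fin_cases j <;> simp [Sgate, Matrix.conjTranspose_apply]

lemma star_c2 : (starRingEnd ℂ) c2 = c2 := by
  rw [map_inv₀, Complex.conj_ofReal]

lemma Td_eq : Tgateᴴ = !![1, 0; 0, c2 * (1 - Complex.I)] := by
  rw [Tgate_eq]
  ext i j
  fin_cases i <;> fin_cases j <;>
    simp [Matrix.conjTranspose_apply, star_c2] <;> ring

-- ==================== 2x2 identities ====================

lemma hHH : Hgate * Hgate = 1 := by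
  ext i j
  fin_cases i <;> fin_cases j <;>
    simp [Hgate, Matrix.mul_apply, Fin.sum_univ_two, Matrix.one_apply] <;>
    first
      | linear_combination
      | linear_combination -hI
      | linear_combination 2⁻¹ * hI
      | linear_combination -2⁻¹ * hI
      | linear_combination c2 * hI
      | linear_combination -c2 * hI
      | linear_combination 2 * hc2
      | linear_combination (1 - Complex.I * Complex.I) * hc2 - 2⁻¹ * hI
      | linear_combination (2 * c2) * hc2
      | linear_combination 2 * c2 * c2 * c2 * hI - 2 * c2 * hc2
      | linear_combination (-2) * c2 * c2 * c2 * hI + 2 * c2 * hc2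

lemma hSS : Sgate * Sgateᴴ = 1 := by
  rw [Sd_eq]
  ext i j
  fin_cases i <;> fin_cases j <;>
    simp [Sgate, Matrix.mul_apply, Fin.sum_univ_two, Matrix.one_apply] <;>
    first
      | linear_combination
      | linear_combination -hI
      | linear_combination 2⁻¹ * hI
      | linear_combination -2⁻¹ * hI
      | linear_combination c2 * hI
      | linear_combination -c2 * hI
      | linear_combination 2 * hc2
      | linear_combination (1 - Complex.I * Complex.I) * hc2 - 2⁻¹ * hI
      | linear_combination (2 * c2) * hc2
      | linear_combination 2 * c2 * c2 * c2 * hI - 2 * c2 * hc2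
      | linear_combination (-2) * c2 * c2 * c2 * hI + 2 * c2 * hc2

lemma hTT : Tgate * Tgateᴴ = 1 := by
  rw [Td_eq, Tgate_eq]
  ext i j
  fin_cases i <;> fin_cases j <;>
    simp [Matrix.mul_apply, Fin.sum_univ_two, Matrix.one_apply] <;>
    first
      | linear_combination
      | linear_combination -hI
      | linear_combination 2⁻¹ * hI
      | linear_combination -2⁻¹ * hI
      | linear_combination c2 * hI
      | linear_combination -c2 * hI
      | linear_combination 2 * hc2
      | linear_combination (1 - Complex.I * Complex.I) * hc2 - 2⁻¹ * hI
      | linear_combination (2 * c2) * hc2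
      | linear_combination 2 * c2 * c2 * c2 * hI - 2 * c2 * hc2
      | linear_combination (-2) * c2 * c2 * c2 * hI + 2 * c2 * hc2

lemma hK : Tgate * Xg * Tgateᴴ * Xg =
    !![c2 * (1 - Complex.I), 0; 0, c2 * (1 + Complex.I)] := by
  rw [Td_eq, Tgate_eq]
  ext i j
  fin_cases i <;> fin_cases j <;>
    simp [Xg, Matrix.mul_apply, Fin.sum_univ_two] <;> try ring

lemma hN : Sgate * Hgate * !![c2 * (1 - Complex.I), 0; 0, c2 * (1 + Complex.I)] *
    Hgate * Sgateᴴ = Rg := by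
  rw [Sd_eq]
  ext i j
  fin_cases i <;> fin_cases j <;>
    simp [Sgate, Hgate, Rg, Matrix.mul_apply, Fin.sum_univ_two] <;>
    first
      | linear_combination
      | linear_combination -hI
      | linear_combination 2⁻¹ * hI
      | linear_combination -2⁻¹ * hI
      | linear_combination c2 * hI
      | linear_combination -c2 * hI
      | linear_combination 2 * hc2
      | linear_combination (1 - Complex.I * Complex.I) * hc2 - 2⁻¹ * hI
      | linear_combination (2 * c2) * hc2
      | linear_combination 2 * c2 * c2 * c2 * hI - 2 * c2 * hc2
      | linear_combination (-2) * c2 * c2 * c2 * hI + 2 * c2 * hc2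

lemma chainA : Sgate * Hgate * Tgate * Tgateᴴ * Hgate * Sgateᴴ = 1 := by
  have h : Sgate * Hgate * Tgate * Tgateᴴ * Hgate * Sgateᴴ =
      Sgate * Hgate * (Tgate * Tgateᴴ) * Hgate * Sgateᴴ := by
    simp only [mul_assoc]
  rw [h, hTT, mul_one]
  have h2 : Sgate * Hgate * Hgate * Sgateᴴ = Sgate * (Hgate * Hgate) * Sgateᴴ := by
    simp only [mul_assoc]
  rw [h2, hHH, mul_one, hSS]

lemma chainB : Sgate * Hgate * Tgate * Xg * Tgateᴴ * Xg * Hgate * Sgateᴴ = Rg := by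
  have h : Sgate * Hgate * Tgate * Xg * Tgateᴴ * Xg * Hgate * Sgateᴴ =
      Sgate * Hgate * (Tgate * Xg * Tgateᴴ * Xg) * Hgate * Sgateᴴ := by
    simp only [mul_assoc]
  rw [h, hK, hN]

lemma chain0big : Hgate * Hgate * Sgate * Sgateᴴ * Sgate * Hgate * Tgate * Tgateᴴ *
    Hgate * Sgateᴴ = 1 := by
  have h : Hgate * Hgate * Sgate * Sgateᴴ * Sgate * Hgate * Tgate * Tgateᴴ * Hgate * Sgateᴴ
      = (Hgate * Hgate) * ((Sgate * Sgateᴴ) *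
        (Sgate * Hgate * Tgate * Tgateᴴ * Hgate * Sgateᴴ)) := by
    simp only [mul_assoc]
  rw [h, hHH, hSS, chainA, one_mul, one_mul]

lemma chain1big : Hgate * Hgate * Sgate * Sgateᴴ * Sgate * Hgate * Tgate * Xg * Tgateᴴ *
    Xg * Hgate * Sgateᴴ = Rg := by
  have h : Hgate * Hgate * Sgate * Sgateᴴ * Sgate * Hgate * Tgate * Xg * Tgateᴴ * Xg *
      Hgate * Sgateᴴ = (Hgate * Hgate) * ((Sgate * Sgateᴴ) *
        (Sgate * Hgate * Tgate * Xg * Tgateᴴ * Xg * Hgate * Sgateᴴ)) := by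
    simp only [mul_assoc]
  rw [h, hHH, hSS, chainB, one_mul, one_mul]

-- ==================== exp lemma ====================

lemma exp_eq_R :
    NormedSpace.exp ((-(Complex.I * ((Real.pi : ℂ) / 4))) • Ygate) = Rg := by
  set c0 : ℂ := -(Complex.I * ((Real.pi : ℂ) / 4)) with hc0
  set U : Matrix (Fin 2) (Fin 2) ℂ := !![1, 1; Complex.I, -Complex.I] with hU
  set V : Matrix (Fin 2) (Fin 2) ℂ := (2 : ℂ)⁻¹ • !![1, -Complex.I; 1, Complex.I] with hV
  have hUV : U * V = 1 := by
    ext i j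
    fin_cases i <;> fin_cases j <;>
      simp [hU, hV, Matrix.mul_apply, Fin.sum_univ_two, Matrix.one_apply] <;>
      first
        | linear_combination
        | linear_combination -hI
        | linear_combination 2⁻¹ * hI
        | linear_combination -2⁻¹ * hI
        | linear_combination c2 * hI
        | linear_combination -c2 * hI
        | linear_combination 2 * hc2
        | linear_combination (1 - Complex.I * Complex.I) * hc2 - 2⁻¹ * hI
        | linear_combination (2 * c2) * hc2
        | linear_combination 2 * c2 * c2 * c2 * hI - 2 * c2 * hc2
        | linear_combination (-2) * c2 * c2 * c2 * hI + 2 * c2 * hc2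
  have hVU : V * U = 1 := by
    ext i j
    fin_cases i <;> fin_cases j <;>
      simp [hU, hV, Matrix.mul_apply, Fin.sum_univ_two, Matrix.one_apply] <;>
      first
        | linear_combination
        | linear_combination -hI
        | linear_combination 2⁻¹ * hI
        | linear_combination -2⁻¹ * hI
        | linear_combination c2 * hI
        | linear_combination -c2 * hI
        | linear_combination 2 * hc2
        | linear_combination (1 - Complex.I * Complex.I) * hc2 - 2⁻¹ * hI
        | linear_combination (2 * c2) * hc2
        | linear_combination 2 * c2 * c2 * c2 * hI - 2 * c2 * hc2
        | linear_combination (-2) * c2 * c2 * c2 * hI + 2 * c2 * hc2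
  let u : (Matrix (Fin 2) (Fin 2) ℂ)ˣ := ⟨U, V, hUV, hVU⟩
  have hdiag : Matrix.diagonal ![c0, -c0] = !![c0, 0; 0, -c0] := by
    ext i j
    fin_cases i <;> fin_cases j <;> simp [Matrix.diagonal]
  have harg : c0 • Ygate = (u : Matrix (Fin 2) (Fin 2) ℂ) *
      Matrix.diagonal ![c0, -c0] *
      ((u⁻¹ : (Matrix (Fin 2) (Fin 2) ℂ)ˣ) : Matrix (Fin 2) (Fin 2) ℂ) := by
    show c0 • Ygate = U * Matrix.diagonal ![c0, -c0] * V
    rw [hdiag]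
    ext i j
    fin_cases i <;> fin_cases j <;>
      simp [hU, hV, Ygate, Matrix.mul_apply, Fin.sum_univ_two] <;>
      first
        | linear_combination
        | linear_combination -hI
        | linear_combination 2⁻¹ * hI
        | linear_combination -2⁻¹ * hI
        | linear_combination c2 * hI
        | linear_combination -c2 * hI
        | linear_combination 2 * hc2
        | linear_combination (1 - Complex.I * Complex.I) * hc2 - 2⁻¹ * hI
        | linear_combination (2 * c2) * hc2
        | linear_combination 2 * c2 * c2 * c2 * hI - 2 * c2 * hc2
        | linear_combination (-2) * c2 * c2 * c2 * hI + 2 * c2 * hc2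
  rw [harg, Matrix.exp_units_conj, Matrix.exp_diagonal, Pi.exp_def]
  show U * _ * V = Rg
  have hd : Matrix.diagonal (fun i => NormedSpace.exp (![c0, -c0] i)) =
      !![c2 * (1 - Complex.I), 0; 0, c2 * (1 + Complex.I)] := by
    have h0 : NormedSpace.exp c0 = c2 * (1 - Complex.I) := by
      rw [← Complex.exp_eq_exp_ℂ, hc0, homega']
    have h1 : NormedSpace.exp (-c0) = c2 * (1 + Complex.I) := by
      rw [← Complex.exp_eq_exp_ℂ, hc0, neg_neg, homega]
    ext i j
    fin_cases i <;> fin_cases j <;> simp [Matrix.diagonal, h0, h1]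
  rw [hd]
  ext i j
  fin_cases i <;> fin_cases j <;>
    simp [hU, hV, Rg, Matrix.mul_apply, Fin.sum_univ_two] <;>
    first
      | linear_combination
      | linear_combination -hI
      | linear_combination 2⁻¹ * hI
      | linear_combination -2⁻¹ * hI
      | linear_combination c2 * hI
      | linear_combination -c2 * hI
      | linear_combination 2 * hc2
      | linear_combination (1 - Complex.I * Complex.I) * hc2 - 2⁻¹ * hI
      | linear_combination (2 * c2) * hc2
      | linear_combination 2 * c2 * c2 * c2 * hI - 2 * c2 * hc2
      | linear_combination (-2) * c2 * c2 * c2 * hI + 2 * c2 * hc2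
  done

-- ==================== Kronecker structure ====================

lemma P0P1_one : P0 + P1 = 1 := by
  ext i j
  fin_cases i <;> fin_cases j <;> simp [P0, P1, Matrix.one_apply]

lemma CNOT_eq : CNOT = P0 ⊗ₖ (1 : Matrix (Fin 2) (Fin 2) ℂ) + P1 ⊗ₖ Xg := by
  ext ⟨i, j⟩ ⟨k, l⟩
  fin_cases i <;> fin_cases j <;> fin_cases k <;> fin_cases l <;>
    simp [CNOT, P0, P1, Xg, Matrix.one_apply] <;> decide

lemma one_kron (g : Matrix (Fin 2) (Fin 2) ℂ) :
    (1 : Matrix (Fin 2) (Fin 2) ℂ) ⊗ₖ g = P0 ⊗ₖ g + P1 ⊗ₖ g := by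
  rw [← P0P1_one, Matrix.add_kronecker]

lemma P00 : P0 * P0 = P0 := by
  ext i j; fin_cases i <;> fin_cases j <;> simp [P0, Matrix.mul_apply, Fin.sum_univ_two]
lemma P11 : P1 * P1 = P1 := by
  ext i j; fin_cases i <;> fin_cases j <;> simp [P1, Matrix.mul_apply, Fin.sum_univ_two]
lemma P01 : P0 * P1 = 0 := by
  ext i j; fin_cases i <;> fin_cases j <;> simp [P0, P1, Matrix.mul_apply, Fin.sum_univ_two]
lemma P10 : P1 * P0 = 0 := by
  ext i j; fin_cases i <;> fin_cases j <;> simp [P0, P1, Matrix.mul_apply, Fin.sum_univ_two]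

lemma kron_mul (A B C D : Matrix (Fin 2) (Fin 2) ℂ) :
    (P0 ⊗ₖ A + P1 ⊗ₖ B) * (P0 ⊗ₖ C + P1 ⊗ₖ D) = P0 ⊗ₖ (A * C) + P1 ⊗ₖ (B * D) := by
  rw [add_mul, mul_add, mul_add, ← Matrix.mul_kronecker_mul, ← Matrix.mul_kronecker_mul,
    ← Matrix.mul_kronecker_mul, ← Matrix.mul_kronecker_mul, P00, P01, P10, P11,
    Matrix.zero_kronecker, Matrix.zero_kronecker]
  abel

-- ==================== distinctness ====================

lemma entry_ne {g h : Matrix (Fin 2) (Fin 2) ℂ} (i j : Fin 2)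
    (hij : g i j ≠ h i j) : g ≠ h := fun e => hij (by rw [e])

lemma H10 : Hgate 1 0 = c2 := by simp [Hgate]
lemma S10 : Sgate 1 0 = 0 := by simp [Sgate]
lemma Sd10 : Sgateᴴ 1 0 = 0 := by rw [Sd_eq]; simp
lemma T10 : Tgate 1 0 = 0 := by rw [Tgate_eq]; simp
lemma Td10 : Tgateᴴ 1 0 = 0 := by rw [Td_eq]; simp

lemma SneH : Sgate ≠ Hgate := entry_ne 1 0 (by rw [S10, H10]; exact (c2_ne ∘ Eq.symm))
lemma SdneH : Sgateᴴ ≠ Hgate := entry_ne 1 0 (by rw [Sd10, H10]; exact (c2_ne ∘ Eq.symm))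
lemma TneH : Tgate ≠ Hgate := entry_ne 1 0 (by rw [T10, H10]; exact (c2_ne ∘ Eq.symm))
lemma TdneH : Tgateᴴ ≠ Hgate := entry_ne 1 0 (by rw [Td10, H10]; exact (c2_ne ∘ Eq.symm))
lemma HneS : Hgate ≠ Sgate := SneH.symm
lemma HneSd : Hgate ≠ Sgateᴴ := SdneH.symm

lemma sqrt2_inv_ne : (Real.sqrt 2)⁻¹ ≠ 0 := by positivity

lemma re_T : (c2 * (1 + Complex.I)).re = (Real.sqrt 2)⁻¹ := by
  rw [c2, ← Complex.ofReal_inv]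
  simp
  field_simp
  exact Real.sq_sqrt (by norm_num)

lemma re_Td : (c2 * (1 - Complex.I)).re = (Real.sqrt 2)⁻¹ := by
  rw [c2, ← Complex.ofReal_inv]
  simp
  field_simp
  exact Real.sq_sqrt (by norm_num)

lemma S11 : Sgate 1 1 = Complex.I := by simp [Sgate]
lemma Sd11 : Sgateᴴ 1 1 = -Complex.I := by rw [Sd_eq]; simp
lemma T11 : Tgate 1 1 = c2 * (1 + Complex.I) := by rw [Tgate_eq]; simp
lemma Td11 : Tgateᴴ 1 1 = c2 * (1 - Complex.I) := by rw [Td_eq]; simp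

lemma SneT : Sgate ≠ Tgate := by
  apply entry_ne 1 1
  rw [S11, T11]
  intro h
  apply sqrt2_inv_ne
  have h2 := congrArg Complex.re h
  rw [re_T] at h2
  simpa using h2.symm
lemma SneTd : Sgate ≠ Tgateᴴ := by
  apply entry_ne 1 1
  rw [S11, Td11]
  intro h
  apply sqrt2_inv_ne
  have h2 := congrArg Complex.re h
  rw [re_Td] at h2
  simpa using h2.symm
lemma SdneT : Sgateᴴ ≠ Tgate := by
  apply entry_ne 1 1
  rw [Sd11, T11]
  intro h
  apply sqrt2_inv_ne
  have h2 := congrArg Complex.re h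
  rw [re_T] at h2
  simpa using h2.symm
lemma SdneTd : Sgateᴴ ≠ Tgateᴴ := by
  apply entry_ne 1 1
  rw [Sd11, Td11]
  intro h
  apply sqrt2_inv_ne
  have h2 := congrArg Complex.re h
  rw [re_Td] at h2
  simpa using h2.symm
lemma TneS : Tgate ≠ Sgate := SneT.symm
lemma TneSd : Tgate ≠ Sgateᴴ := SdneT.symm
lemma TdneS : Tgateᴴ ≠ Sgate := SneTd.symm
lemma TdneSd : Tgateᴴ ≠ Sgateᴴ := SdneTd.symm
lemma HneT : Hgate ≠ Tgate := TneH.symm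
lemma HneTd : Hgate ≠ Tgateᴴ := TdneH.symm

/-- Clifford+T decomposition of the controlled `exp(−i(π/4)Y)` gate with gate count
`(H, S/S†, CNOT, T/T†) = (4, 4, 2, 2)`: a sequence of 12 gates, each the CNOT gate or
`I₂ ⊗ g` with `g ∈ {H, S, S†, T, T†}`, whose product is
`P₀ ⊗ I₂ + P₁ ⊗ exp(−i(π/4)Y)`, with exactly 4 factors `I₂ ⊗ H`, 4 factors from
`{I₂ ⊗ S, I₂ ⊗ S†}`, 2 factors from `{I₂ ⊗ T, I₂ ⊗ T†}`, and 2 CNOT gates. -/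
theorem ctrl_exp_Y_clifford_T_decomposition :
    ∃ f : Fin 12 → Option (Matrix (Fin 2) (Fin 2) ℂ),
      (∀ k g, f k = some g →
          g = Hgate ∨ g = Sgate ∨ g = Sgateᴴ ∨ g = Tgate ∨ g = Tgateᴴ) ∧
      (List.ofFn fun k => realize (f k)).prod =
        P0 ⊗ₖ (1 : Matrix (Fin 2) (Fin 2) ℂ) +
          P1 ⊗ₖ NormedSpace.exp ((-(Complex.I * ((Real.pi : ℂ) / 4))) • Ygate) ∧
      (Finset.univ.filter fun k : Fin 12 => f k = some Hgate).card = 4 ∧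
      (Finset.univ.filter fun k : Fin 12 =>
          f k = some Sgate ∨ f k = some Sgateᴴ).card = 4 ∧
      (Finset.univ.filter fun k : Fin 12 =>
          f k = some Tgate ∨ f k = some Tgateᴴ).card = 2 ∧
      (Finset.univ.filter fun k : Fin 12 => f k = none).card = 2 := by
  refine ⟨![some Hgate, some Hgate, some Sgate, some Sgateᴴ, some Sgate, some Hgate,
      some Tgate, none, some Tgateᴴ, none, some Hgate, some Sgateᴴ], ?_, ?_, ?_, ?_, ?_, ?_⟩
  · intro k g h
    fin_cases k <;> first
      | exact Option.noConfusion h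
      | (injection h with h'; subst h'; tauto)
      | injection h
  · rw [exp_eq_R]
    simp only [List.ofFn_succ, List.ofFn_zero, List.prod_cons, List.prod_nil,
      Matrix.cons_val_zero, Matrix.cons_val_succ, Fin.succ_zero_eq_one, realize, mul_one]
    rw [CNOT_eq]
    simp only [one_kron, kron_mul]
    simp only [one_mul, mul_one]
    simp only [← mul_assoc]
    rw [chain0big, chain1big]
  · rw [Finset.card_filter]
    rw [Fin.sum_univ_succ, Fin.sum_univ_succ, Fin.sum_univ_succ, Fin.sum_univ_succ,
      Fin.sum_univ_succ, Fin.sum_univ_succ, Fin.sum_univ_succ, Fin.sum_univ_succ,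
      Fin.sum_univ_succ, Fin.sum_univ_succ, Fin.sum_univ_succ, Fin.sum_univ_succ]
    simp [SneH, SdneH, TneH, TdneH]
  · rw [Finset.card_filter]
    rw [Fin.sum_univ_succ, Fin.sum_univ_succ, Fin.sum_univ_succ, Fin.sum_univ_succ,
      Fin.sum_univ_succ, Fin.sum_univ_succ, Fin.sum_univ_succ, Fin.sum_univ_succ,
      Fin.sum_univ_succ, Fin.sum_univ_succ, Fin.sum_univ_succ, Fin.sum_univ_succ]
    simp [HneS, HneSd, TneS, TneSd, TdneS, TdneSd]
  · rw [Finset.card_filter]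
    rw [Fin.sum_univ_succ, Fin.sum_univ_succ, Fin.sum_univ_succ, Fin.sum_univ_succ,
      Fin.sum_univ_succ, Fin.sum_univ_succ, Fin.sum_univ_succ, Fin.sum_univ_succ,
      Fin.sum_univ_succ, Fin.sum_univ_succ, Fin.sum_univ_succ, Fin.sum_univ_succ]
    simp [HneT, HneTd, SneT, SneTd, SdneT, SdneTd]
  · rw [Finset.card_filter]
    rw [Fin.sum_univ_succ, Fin.sum_univ_succ, Fin.sum_univ_succ, Fin.sum_univ_succ,
      Fin.sum_univ_succ, Fin.sum_univ_succ, Fin.sum_univ_succ, Fin.sum_univ_succ,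
      Fin.sum_univ_succ, Fin.sum_univ_succ, Fin.sum_univ_succ, Fin.sum_univ_succ]
    simp []
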